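/- Ranocha's flux is entropy-conservative: for every γ > 1 and every pair of states u₋ = (ρ₋, v₋, p₋), u₊ = (ρ₊, v₊, p₊) with ρ₋ ≠ ρ₊ and ρ₋/p₋ ≠ ρ₊/p₊, Tadmor's entropy-conservation condition ⟦w⟧ · f^num(u₋, u₊) = ⟦ψ⟧ holds for Ranocha's flux f^num. -/

import Mathlib

set_option maxHeartbeats 2000000


noncomputable section
open Real

/-- A state `u = (ρ, v, p)` of the 1D compressible Euler equations:
density `u.1`, velocity `u.2.1`, pressure `u.2.2`. -/
abbrev EulerState := ℝ × ℝ × ℝ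

/-- Entropy variables `w(u)` for the entropy `U = -ρ s/(γ-1)`, `s = log(p/ρ^γ)`. -/
def entVar (γ : ℝ) (u : EulerState) : EulerState :=
  (γ/(γ-1) - Real.log (u.2.2 / u.1 ^ γ)/(γ-1) - u.1 * u.2.1^2/(2*u.2.2),
   u.1*u.2.1/u.2.2,
   -(u.1/u.2.2))

/-- Euclidean dot product on `ℝ × ℝ × ℝ`. -/
def dot3 (a b : EulerState) : ℝ := a.1*b.1 + a.2.1*b.2.1 + a.2.2*b.2.2

/-- Logarithmic mean `(a₊ - a₋)/(log a₊ - log a₋)` (left argument is the `-` state). -/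
def logMean (am ap : ℝ) : ℝ := (ap - am)/(Real.log ap - Real.log am)

/-- Ranocha's EC, KEP and PEP two-point numerical flux. -/
def ranochaFlux (γ : ℝ) (um up : EulerState) : EulerState :=
  (logMean um.1 up.1 * ((um.2.1 + up.2.1)/2),
   logMean um.1 up.1 * ((um.2.1 + up.2.1)/2)^2 + (um.2.2 + up.2.2)/2,
   (1/2) * logMean um.1 up.1 * ((um.2.1 + up.2.1)/2) * ((up.2.1*um.2.1 + um.2.1*up.2.1)/2)
     + (1/(γ-1)) * logMean um.1 up.1 * (logMean (um.1/um.2.2) (up.1/up.2.2))⁻¹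
        * ((um.2.1 + up.2.1)/2)
     + (up.2.2*um.2.1 + um.2.2*up.2.1)/2)

/-- Ranocha's flux is entropy-conservative: Tadmor's condition
`⟦w⟧ ⬝ f^num = ⟦ψ⟧` with flux potential `ψ = ρ v` holds for all admissible pairs
of states with `ρ₋ ≠ ρ₊` and `ρ₋/p₋ ≠ ρ₊/p₊`. -/
theorem ranochaFlux_entropy_conservative
    (γ : ℝ) (hγ : 1 < γ)
    (ρm ρp vm vp pm pp : ℝ)
    (hρm : 0 < ρm) (hρp : 0 < ρp) (hpm : 0 < pm) (hpp : 0 < pp)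
    (hρ : ρm ≠ ρp) (hρovp : ρm/pm ≠ ρp/pp) :
    dot3 (entVar γ (ρp, vp, pp) - entVar γ (ρm, vm, pm))
        (ranochaFlux γ (ρm, vm, pm) (ρp, vp, pp))
      = ρp * vp - ρm * vm := by
  have hγ1 : γ - 1 ≠ 0 := by linarith
  have hLρ : Real.log ρp - Real.log ρm ≠ 0 := by
    refine sub_ne_zero.mpr fun h => hρ ?_
    have := congrArg Real.exp h
    rwa [Real.exp_log hρp, Real.exp_log hρm, eq_comm] at this
  have hbm : 0 < ρm / pm := div_pos hρm hpm
  have hbp : 0 < ρp / pp := div_pos hρp hpp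
  have hLb : (Real.log ρp - Real.log pp) - (Real.log ρm - Real.log pm) ≠ 0 := by
    rw [← Real.log_div (ne_of_gt hρp) (ne_of_gt hpp),
        ← Real.log_div (ne_of_gt hρm) (ne_of_gt hpm)]
    refine sub_ne_zero.mpr fun h => hρovp ?_
    have := congrArg Real.exp h
    rwa [Real.exp_log hbp, Real.exp_log hbm, eq_comm] at this
  have h1 : Real.log (pp / ρp ^ γ) = Real.log pp - γ * Real.log ρp := by
    rw [Real.log_div (ne_of_gt hpp) (by positivity), Real.log_rpow hρp]
  have h2 : Real.log (pm / ρm ^ γ) = Real.log pm - γ * Real.log ρm := by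
    rw [Real.log_div (ne_of_gt hpm) (by positivity), Real.log_rpow hρm]
  have h3 : Real.log (ρp / pp) = Real.log ρp - Real.log pp :=
    Real.log_div (ne_of_gt hρp) (ne_of_gt hpp)
  have h4 : Real.log (ρm / pm) = Real.log ρm - Real.log pm :=
    Real.log_div (ne_of_gt hρm) (ne_of_gt hpm)
  have hB : ρp / pp - ρm / pm ≠ 0 := sub_ne_zero.mpr (Ne.symm hρovp)
  have hB' : ρp * pm - ρm * pp ≠ 0 := by
    refine sub_ne_zero.mpr fun h => hρovp ?_
    field_simp
    linarith
  simp only [dot3, entVar, ranochaFlux, logMean, Prod.fst_sub, Prod.snd_sub, h1, h2, h3, h4]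
  rw [inv_div,
    show ρp/pp - ρm/pm = (ρp*pm - ρm*pp)/(pp*pm) by field_simp [hpm.ne', hpp.ne'],
    div_div_eq_mul_div]
  have hpm' := hpm.ne'
  have hpp' := hpp.ne'
  generalize Real.log ρm = a at *
  generalize Real.log ρp = b at *
  generalize Real.log pm = c at *
  generalize Real.log pp = d at *
  field_simp [hB', show ρp * pm - pp * ρm ≠ 0 by rwa [mul_comm pp]]
  ring
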